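/- For every real τ with 0 < τ ≤ 1/4 and every θ₀ with 0 < θ₀ < π/2, one has lim_{r→0⁺} ∫_0^{θ₀} F(r e^{iθ}, τ) · i r e^{iθ} dθ = 0 (the integral over the circular arc of radius r from angle 0 to angle θ₀ tends to 0 as r → 0⁺). -/

import Mathlib

open Real Complex Filter MeasureTheory intervalIntegral

noncomputable def F (τ : ℝ) (z : ℂ) : ℂ :=
  2 * (π : ℂ) * (1 + (1 / 4 : ℂ) * z ^ (-(5 : ℂ) / 2)) *
    Complex.exp (-(π : ℂ) * z - (π : ℂ) / (4 * z)) *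
    (1 - Complex.I * z) ^ ((1 / 2 : ℂ) * (1 / 2 + 2 * (π : ℂ) * Complex.I / (τ : ℂ) ^ 2))

theorem statement10 (τ : ℝ) (hτ0 : 0 < τ) (hτ : τ ≤ 1 / 4) (θ₀ : ℝ)
    (hθ₀0 : 0 < θ₀) (hθ₀ : θ₀ < π / 2) :
    Tendsto
      (fun r : ℝ => ∫ θ in (0 : ℝ)..θ₀,
        F τ ((r : ℂ) * Complex.exp (Complex.I * (θ : ℂ))) *
          (Complex.I * (r : ℂ) * Complex.exp (Complex.I * (θ : ℂ))))
      (nhdsWithin 0 (Set.Ioi 0)) (nhds 0) := by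
  have hπ := Real.pi_pos
  have hcos : 0 < Real.cos θ₀ := Real.cos_pos_of_mem_Ioo ⟨by linarith, hθ₀⟩
  set a : ℝ := π * Real.cos θ₀ / 4 with ha_def
  have ha : 0 < a := by positivity
  set C : ℝ := 2 * Real.exp (π ^ 2 / τ ^ 2) with hC_def
  have hC : 0 < C := by positivity
  set g : ℝ → ℝ := fun r =>
    (2 * π * (1 + r ^ (-(5 : ℝ) / 2) / 4) * Real.exp (-a / r) * C * 1) * |θ₀ - 0| with hg_def
  -- pointwise bound
  have key : ∀ r ∈ Set.Ioo (0 : ℝ) 1,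
      ‖∫ θ in (0 : ℝ)..θ₀,
        F τ ((r : ℂ) * Complex.exp (Complex.I * (θ : ℂ))) *
          (Complex.I * (r : ℂ) * Complex.exp (Complex.I * (θ : ℂ)))‖ ≤ g r := by
    intro r hr
    obtain ⟨hr0, hr1⟩ := hr
    apply intervalIntegral.norm_integral_le_of_norm_le_const
    intro θ hθ
    rw [Set.uIoc_of_le hθ₀0.le] at hθ
    obtain ⟨hθ1, hθ2⟩ := hθ
    set E : ℂ := Complex.exp (Complex.I * (θ : ℂ)) with hE_def
    set z : ℂ := (r : ℂ) * E with hz_def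
    have habsE : ‖E‖ = 1 := by
      rw [hE_def, Complex.norm_exp]; simp
    have habsz : ‖z‖ = r := by
      rw [hz_def, norm_mul, habsE, Complex.norm_real, Real.norm_eq_abs, abs_of_pos hr0, mul_one]
    have hz0 : z ≠ 0 := by
      intro h
      rw [h] at habsz; simp at habsz; linarith
    have hcosθ : Real.cos θ₀ ≤ Real.cos θ :=
      Real.cos_le_cos_of_nonneg_of_le_pi hθ1.le (by linarith) hθ2
    have hcosθ0 : 0 < Real.cos θ := lt_of_lt_of_le hcos hcosθ
    -- factor 1
    have h2 : ‖1 + (1 / 4 : ℂ) * z ^ (-(5 : ℂ) / 2)‖ ≤ 1 + r ^ (-(5 : ℝ) / 2) / 4 := by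
      have hcpow : ‖z ^ (-(5 : ℂ) / 2)‖ ≤ r ^ (-(5 : ℝ) / 2) := by
        have h := Complex.norm_cpow_le z (-(5 : ℂ) / 2)
        have hre : ((-(5 : ℂ) / 2)).re = -(5 : ℝ) / 2 := by norm_num
        have him : ((-(5 : ℂ) / 2)).im = 0 := by norm_num
        rw [hre, him, mul_zero, Real.exp_zero, div_one, habsz] at h
        exact h
      calc ‖1 + (1 / 4 : ℂ) * z ^ (-(5 : ℂ) / 2)‖
          ≤ ‖(1 : ℂ)‖ + ‖(1 / 4 : ℂ) * z ^ (-(5 : ℂ) / 2)‖ := norm_add_le _ _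
        _ = 1 + (1 / 4) * ‖z ^ (-(5 : ℂ) / 2)‖ := by
            rw [norm_one, norm_mul]; norm_num
        _ ≤ 1 + r ^ (-(5 : ℝ) / 2) / 4 := by linarith
    -- factor 2 : exponential
    have h3 : ‖Complex.exp (-(π : ℂ) * z - (π : ℂ) / (4 * z))‖ ≤ Real.exp (-a / r) := by
      have hE0 : E ≠ 0 := Complex.exp_ne_zero _
      have hr0' : (r : ℂ) ≠ 0 := by exact_mod_cast hr0.ne'
      have h4z : (π : ℂ) / (4 * z) = ((π / (4 * r) : ℝ) : ℂ) * Complex.exp (-(Complex.I * (θ : ℂ))) := by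
        rw [hz_def, hE_def, Complex.exp_neg]
        push_cast
        field_simp
      have hfirst : -(π : ℂ) * z = ((-(π * r) : ℝ) : ℂ) * Complex.exp (Complex.I * (θ : ℂ)) := by
        rw [hz_def, hE_def]; push_cast; ring
      have hre : (-(π : ℂ) * z - (π : ℂ) / (4 * z)).re
          = -(π * r) * Real.cos θ - (π / (4 * r)) * Real.cos θ := by
        rw [Complex.sub_re, hfirst, h4z, Complex.re_ofReal_mul, Complex.re_ofReal_mul]
        have e1 : Complex.I * (θ : ℂ) = (θ : ℂ) * Complex.I := by ring
        have e2 : -((θ : ℂ) * Complex.I) = ((-θ : ℝ) : ℂ) * Complex.I := by push_cast; ring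
        rw [e1, e2, Complex.exp_ofReal_mul_I_re, Complex.exp_ofReal_mul_I_re, Real.cos_neg]
      rw [Complex.norm_exp, hre]
      apply Real.exp_le_exp.mpr
      have hb : a / r ≤ (π / (4 * r)) * Real.cos θ := by
        rw [ha_def, div_mul_eq_mul_div, div_le_div_iff₀ (by linarith) (by linarith)]
        nlinarith [mul_le_mul_of_nonneg_right (mul_le_mul_of_nonneg_left hcosθ hπ.le) hr0.le]
      have hz' : 0 < π * r * Real.cos θ := by positivity
      have h1' : -(π * r) * Real.cos θ ≤ 0 := by nlinarith [hz']
      have h2' : -(π / (4 * r) * Real.cos θ) ≤ -(a / r) := neg_le_neg hb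
      calc -(π * r) * Real.cos θ - π / (4 * r) * Real.cos θ ≤ 0 - a / r := by linarith
        _ = -a / r := by ring
    -- factor 3 : cpow
    have h4 : ‖(1 - Complex.I * z) ^ ((1 / 2 : ℂ) * (1 / 2 + 2 * (π : ℂ) * Complex.I / (τ : ℂ) ^ 2))‖ ≤ C := by
      have hτc : (τ : ℂ) ≠ 0 := by exact_mod_cast hτ0.ne'
      have hs : (1 / 2 : ℂ) * (1 / 2 + 2 * (π : ℂ) * Complex.I / (τ : ℂ) ^ 2)
          = ((1 / 4 : ℝ) : ℂ) + ((π / τ ^ 2 : ℝ) : ℂ) * Complex.I := by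
        push_cast
        field_simp
        ring
      have hsre : ((1 / 2 : ℂ) * (1 / 2 + 2 * (π : ℂ) * Complex.I / (τ : ℂ) ^ 2)).re = 1 / 4 := by
        rw [hs]; simp [-Complex.ofReal_div]
      have hsim : ((1 / 2 : ℂ) * (1 / 2 + 2 * (π : ℂ) * Complex.I / (τ : ℂ) ^ 2)).im = π / τ ^ 2 := by
        rw [hs]; simp [-Complex.ofReal_div]
      have habs2 : ‖(1 - Complex.I * z)‖ ≤ 2 := by
        calc ‖(1 - Complex.I * z)‖ ≤ ‖(1 : ℂ)‖ + ‖(Complex.I * z)‖ :=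
              norm_sub_le _ _
          _ = 1 + r := by rw [norm_one, norm_mul, Complex.norm_I, one_mul, habsz]
          _ ≤ 2 := by linarith
      have h := Complex.norm_cpow_le (1 - Complex.I * z)
        ((1 / 2 : ℂ) * (1 / 2 + 2 * (π : ℂ) * Complex.I / (τ : ℂ) ^ 2))
      rw [hsre, hsim] at h
      refine h.trans ?_
      have hnum : ‖(1 - Complex.I * z)‖ ^ (1 / 4 : ℝ) ≤ 2 := by
        calc ‖(1 - Complex.I * z)‖ ^ (1 / 4 : ℝ)
            ≤ (2 : ℝ) ^ (1 / 4 : ℝ) := Real.rpow_le_rpow (norm_nonneg _) habs2 (by norm_num)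
          _ ≤ (2 : ℝ) ^ (1 : ℝ) := Real.rpow_le_rpow_of_exponent_le (by norm_num) (by norm_num)
          _ = 2 := Real.rpow_one 2
      have hden : Real.exp (-(π ^ 2 / τ ^ 2)) ≤ Real.exp (Complex.arg (1 - Complex.I * z) * (π / τ ^ 2)) := by
        apply Real.exp_le_exp.mpr
        have harg : -π ≤ Complex.arg (1 - Complex.I * z) := (Complex.neg_pi_lt_arg _).le
        have hpos : 0 ≤ π / τ ^ 2 := by positivity
        have : -π * (π / τ ^ 2) ≤ Complex.arg (1 - Complex.I * z) * (π / τ ^ 2) :=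
          mul_le_mul_of_nonneg_right harg hpos
        calc -(π ^ 2 / τ ^ 2) = -π * (π / τ ^ 2) := by ring
          _ ≤ _ := this
      calc ‖(1 - Complex.I * z)‖ ^ (1 / 4 : ℝ) / Real.exp (Complex.arg (1 - Complex.I * z) * (π / τ ^ 2))
          ≤ 2 / Real.exp (-(π ^ 2 / τ ^ 2)) :=
            div_le_div₀ (by norm_num) hnum (Real.exp_pos _) hden
        _ = C := by rw [hC_def, Real.exp_neg, div_eq_mul_inv, inv_inv]
    -- factor 4
    have h5 : ‖Complex.I * (r : ℂ) * E‖ ≤ 1 := by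
      rw [norm_mul, norm_mul, Complex.norm_I, Complex.norm_real, Real.norm_eq_abs, habsE,
        abs_of_pos hr0, one_mul, mul_one]
      linarith
    have h1 : ‖(2 * (π : ℂ))‖ = 2 * π := by
      rw [norm_mul, Complex.norm_two, Complex.norm_real, Real.norm_eq_abs,
        abs_of_pos hπ]
    show ‖F τ z * (Complex.I * (r : ℂ) * E)‖ ≤ _
    rw [F, norm_mul, norm_mul, norm_mul, norm_mul, h1]
    have hnn1 : (0:ℝ) ≤ 1 + r ^ (-(5 : ℝ) / 2) / 4 := by positivity
    gcongr <;> first | exact h2 | exact h3 | exact h4 | exact h5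
  -- the bound tends to 0
  have hg0 : Tendsto g (nhdsWithin 0 (Set.Ioi 0)) (nhds 0) := by
    have hX : Tendsto (fun r : ℝ => (1 + r ^ (-(5 : ℝ) / 2) / 4) * Real.exp (-a / r))
        (nhdsWithin 0 (Set.Ioi 0)) (nhds 0) := by
      have hinv : Tendsto (fun r : ℝ => r⁻¹) (nhdsWithin 0 (Set.Ioi 0)) atTop :=
        tendsto_inv_nhdsGT_zero
      have T1 : Tendsto (fun r : ℝ => Real.exp (-a / r)) (nhdsWithin 0 (Set.Ioi 0)) (nhds 0) := by
        have h := (Real.tendsto_exp_atBot).comp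
          ((tendsto_neg_atBot_iff.mpr ((tendsto_const_mul_atTop_of_pos ha).mpr hinv)))
        refine h.congr fun r => ?_
        simp [Function.comp, neg_div, div_eq_mul_inv]
      have T2 : Tendsto (fun r : ℝ => r ^ (-(5 : ℝ) / 2) * Real.exp (-a / r))
          (nhdsWithin 0 (Set.Ioi 0)) (nhds 0) := by
        have h := (tendsto_rpow_mul_exp_neg_mul_atTop_nhds_zero (5 / 2) a ha).comp hinv
        apply h.congr'
        filter_upwards [self_mem_nhdsWithin] with r hr
        have hr0 : (0:ℝ) < r := hr
        simp only [Function.comp_apply]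
        rw [Real.inv_rpow hr0.le, ← Real.rpow_neg hr0.le, div_eq_mul_inv]
        norm_num
        left
        ring
      have := (T1.add (T2.div_const 4))
      simp only [zero_add, zero_div] at this
      refine this.congr fun r => ?_
      ring
    have := ((hX.const_mul (2 * π)).mul_const C).mul_const 1
    simp only [mul_zero, zero_mul] at this
    have h2 := this.mul_const |θ₀ - 0|
    simp only [zero_mul] at h2
    refine h2.congr fun r => ?_
    rw [hg_def]
    ring
  apply squeeze_zero_norm' _ hg0
  filter_upwards [Ioo_mem_nhdsGT_of_mem (Set.mem_Ico.mpr ⟨le_refl 0, zero_lt_one⟩)] with r hr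
  exact key r hr
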